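/- Assume x_0 ∈ range(A^T). The tail-averaged randomized Kaczmarz estimator satisfies the alternative bound E||x̄_t - x_star||^2 ≤ ((2κ_dem^2 - 1)/(t - t_b)) [κ_dem^2 (1 - κ_dem^{-2})^{t_b} ||x_0 - x_star||^2 / (t - t_b) + ||A^+||^2 ||b - A x_star||^2]. -/

import Mathlib

open Matrix Finset
noncomputable section

/-- Squared Euclidean norm of a vector. -/
def vnormSq {k : ℕ} (x : Fin k → ℝ) : ℝ := ∑ i, x i ^ 2

/-- Squared Frobenius norm of a matrix. -/
def frobSq {n d : ℕ} (A : Matrix (Fin n) (Fin d) ℝ) : ℝ := ∑ i, vnormSq (A i)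

/-- Row sampling probability ‖a_i‖²/‖A‖_F² used by randomized Kaczmarz. -/
def rowProb {n d : ℕ} (A : Matrix (Fin n) (Fin d) ℝ) (i : Fin n) : ℝ := vnormSq (A i) / frobSq A

/-- Spectral norm (ℓ²-operator norm) of a matrix. -/
def matSpectralNorm {n d : ℕ} (M : Matrix (Fin n) (Fin d) ℝ) : ℝ :=
  ‖LinearMap.toContinuousLinearMap (Matrix.toEuclideanLin M)‖

/-- The four Penrose conditions characterizing the Moore–Penrose pseudoinverse. -/
def IsMoorePenrose {n d : ℕ} (A : Matrix (Fin n) (Fin d) ℝ) (Ap : Matrix (Fin d) (Fin n) ℝ) : Prop :=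
  A * Ap * A = A ∧ Ap * A * Ap = Ap ∧ (A * Ap)ᵀ = A * Ap ∧ (Ap * A)ᵀ = Ap * A

/-- Demmel condition number κ_dem = ‖A⁺‖ ‖A‖_F. -/
def kdem {n d : ℕ} (A : Matrix (Fin n) (Fin d) ℝ) (Ap : Matrix (Fin d) (Fin n) ℝ) : ℝ :=
  matSpectralNorm Ap * Real.sqrt (frobSq A)

/-- One randomized Kaczmarz update using row i. -/
def rkStep {n d : ℕ} (A : Matrix (Fin n) (Fin d) ℝ) (b : Fin n → ℝ) (i : Fin n) (x : Fin d → ℝ) :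
    Fin d → ℝ := x + ((b i - A i ⬝ᵥ x) / vnormSq (A i)) • A i

/-- Randomized Kaczmarz iterates along a fixed path ω of row indices. -/
def rkSeq {n d : ℕ} (A : Matrix (Fin n) (Fin d) ℝ) (b : Fin n → ℝ) (x0 : Fin d → ℝ)
    (ω : ℕ → Fin n) : ℕ → Fin d → ℝ
  | 0 => x0
  | t + 1 => rkStep A b (ω t) (rkSeq A b x0 ω t)

/-- Extend a finite path of indices to an infinite one. -/
def extendPath {n T : ℕ} [NeZero n] (ω : Fin T → Fin n) : ℕ → Fin n :=
  fun s => if h : s < T then ω ⟨s, h⟩ else 0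

/-- Probability of a finite path of i.i.d. row indices. -/
def pathWeight {n d T : ℕ} (A : Matrix (Fin n) (Fin d) ℝ) (ω : Fin T → Fin n) : ℝ :=
  ∏ t, rowProb A (ω t)

/-- The expected one-step Kaczmarz contraction matrix I - AᵀA/‖A‖_F². -/
def kacMat {n d : ℕ} (A : Matrix (Fin n) (Fin d) ℝ) : Matrix (Fin d) (Fin d) ℝ :=
  1 - (frobSq A)⁻¹ • (Aᵀ * A)

/-- x lies in the row space range(Aᵀ). -/
def inRowSpace {n d : ℕ} (A : Matrix (Fin n) (Fin d) ℝ) (x : Fin d → ℝ) : Prop :=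
  ∃ u : Fin n → ℝ, x = Aᵀ *ᵥ u

/-- RK-RR iterates: Kaczmarz step followed by weight decay by μ. -/
def rrSeq {n d : ℕ} (A : Matrix (Fin n) (Fin d) ℝ) (b : Fin n → ℝ) (μ : ℝ) (x0 : Fin d → ℝ)
    (ω : ℕ → Fin n) : ℕ → Fin d → ℝ
  | 0 => x0
  | t + 1 => μ • rkStep A b (ω t) (rrSeq A b μ x0 ω t)

/-- Orthogonal projection step (I - a aᵀ/‖a‖²) x for row a = A i. -/
def projStep {n d : ℕ} (A : Matrix (Fin n) (Fin d) ℝ) (i : Fin n) (x : Fin d → ℝ) : Fin d → ℝ :=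
  x - ((A i ⬝ᵥ x) / vnormSq (A i)) • A i

/-- RK-RR bias sequence m_{t+1} = μ (I - a aᵀ/‖a‖²) m_t. -/
def biasSeq {n d : ℕ} (A : Matrix (Fin n) (Fin d) ℝ) (μ : ℝ) (m0 : Fin d → ℝ)
    (ω : ℕ → Fin n) : ℕ → Fin d → ℝ
  | 0 => m0
  | t + 1 => μ • projStep A (ω t) (biasSeq A μ m0 ω t)

/-- RK-RR variance sequence v_{t+1} = μ(I - aaᵀ/‖a‖²)v_t + μ (b_i - aᵀx_μ)a/‖a‖² - (1-μ)x_μ. -/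
def varSeq {n d : ℕ} (A : Matrix (Fin n) (Fin d) ℝ) (b : Fin n → ℝ) (μ : ℝ) (xmu : Fin d → ℝ)
    (ω : ℕ → Fin n) : ℕ → Fin d → ℝ
  | 0 => 0
  | t + 1 => μ • projStep A (ω t) (varSeq A b μ xmu ω t)
      + (μ * ((b (ω t) - A (ω t) ⬝ᵥ xmu) / vnormSq (A (ω t)))) • A (ω t)
      - (1 - μ) • xmu

/-- Covariance matrix Σ = I_m + v 1_m 1_mᵀ. -/
def covM (m : ℕ) (v : ℝ) : Matrix (Fin m) (Fin m) ℝ := 1 + v • Matrix.of fun _ _ => 1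

/-- Block Σ_{S,T} of the covariance matrix Σ = I + v 1 1ᵀ. -/
def subBlock {m : ℕ} (v : ℝ) (S T : Finset (Fin m)) : Matrix ↥S ↥T ℝ :=
  (covM m v).submatrix (fun i => i.1) (fun j => j.1)

/-- A deterministic adaptive algorithm that accesses at most t entries of b
(given full access to A) and outputs an estimate of the least-squares solution. -/
structure RowAccessAlg (d t : ℕ) where
  query : (n : ℕ) → Matrix (Fin n) (Fin d) ℝ → (j : Fin t) → (Fin (j : ℕ) → ℝ) → Fin n
  output : (n : ℕ) → Matrix (Fin n) (Fin d) ℝ → (Fin t → ℝ) → Fin d → ℝ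

/-- The successive answers to the algorithm's adaptive queries. -/
def RowAccessAlg.answers {d t : ℕ} (alg : RowAccessAlg d t) (n : ℕ)
    (A : Matrix (Fin n) (Fin d) ℝ) (b : Fin n → ℝ) : (j : ℕ) → j < t → ℝ
  | j, h => b (alg.query n A ⟨j, h⟩ fun i => alg.answers n A b i (i.isLt.trans h))
  termination_by j _ => j

/-- The algorithm's output estimate on the problem (A, b). -/
def RowAccessAlg.run {d t : ℕ} (alg : RowAccessAlg d t) (n : ℕ)
    (A : Matrix (Fin n) (Fin d) ℝ) (b : Fin n → ℝ) : Fin d → ℝ :=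
  alg.output n A fun j => alg.answers n A b j j.isLt

section TarkAux
open Matrix Finset

namespace TarkAux

variable {n d : ℕ}

lemma vnormSq_nonneg {k : ℕ} (x : Fin k → ℝ) : 0 ≤ vnormSq x :=
  Finset.sum_nonneg fun i _ => sq_nonneg _

lemma vnormSq_eq_dot {k : ℕ} (x : Fin k → ℝ) : vnormSq x = x ⬝ᵥ x := by
  simp [vnormSq, dotProduct, sq]

lemma vnormSq_pos {k : ℕ} {x : Fin k → ℝ} (hx : x ≠ 0) : 0 < vnormSq x := by
  rcases (vnormSq_nonneg x).lt_or_eq with h | h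
  · exact h
  · exfalso; apply hx; funext i
    have := (Finset.sum_eq_zero_iff_of_nonneg (fun i _ => sq_nonneg (x i))).mp h.symm i (mem_univ i)
    have := sq_eq_zero_iff.mp this
    simpa using this

lemma vnormSq_smul {k : ℕ} (c : ℝ) (x : Fin k → ℝ) : vnormSq (c • x) = c ^ 2 * vnormSq x := by
  simp [vnormSq, Finset.mul_sum, mul_pow]

lemma dot_CS {k : ℕ} (x y : Fin k → ℝ) : (x ⬝ᵥ y) ^ 2 ≤ vnormSq x * vnormSq y := by
  simpa [vnormSq, dotProduct] using Finset.sum_mul_sq_le_sq_mul_sq Finset.univ x y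

lemma dot_le_of_sq {k : ℕ} {x y : Fin k → ℝ} {c : ℝ} (hc : 0 ≤ c)
    (hy : vnormSq y ≤ c ^ 2 * vnormSq x) : x ⬝ᵥ y ≤ c * vnormSq x := by
  have h1 := dot_CS x y
  have h2 : (x ⬝ᵥ y) ^ 2 ≤ (c * vnormSq x) ^ 2 := by
    calc (x ⬝ᵥ y) ^ 2 ≤ vnormSq x * vnormSq y := h1
    _ ≤ vnormSq x * (c ^ 2 * vnormSq x) := by
        exact mul_le_mul_of_nonneg_left hy (vnormSq_nonneg x)
    _ = (c * vnormSq x) ^ 2 := by ring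
  nlinarith [mul_nonneg hc (vnormSq_nonneg x)]

/-- The key property of the spectral norm that we need. -/
lemma spec_bound {k l : ℕ} (M : Matrix (Fin k) (Fin l) ℝ) (x : Fin l → ℝ) :
    vnormSq (M *ᵥ x) ≤ matSpectralNorm M ^ 2 * vnormSq x := by
  classical
  set f := LinearMap.toContinuousLinearMap (Matrix.toEuclideanLin M) with hf
  set x' : EuclideanSpace ℝ (Fin l) := (WithLp.equiv 2 (Fin l → ℝ)).symm x with hx'
  have hnorm : ∀ {m : ℕ} (v : EuclideanSpace ℝ (Fin m)), ‖v‖ ^ 2 = vnormSq (fun i => v i) := by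
    intro m v
    rw [EuclideanSpace.norm_eq, Real.sq_sqrt (by positivity)]
    simp [vnormSq, sq_abs]
  have happ : (fun i => f x' i) = M *ᵥ x := by
    simp [hf, hx', Matrix.toEuclideanLin, Matrix.toLin'_apply]
  have h2 : ‖f x'‖ ^ 2 ≤ ‖f‖ ^ 2 * ‖x'‖ ^ 2 := by
    have hop := f.le_opNorm x'
    nlinarith [norm_nonneg (f x'), norm_nonneg f, norm_nonneg x']
  calc vnormSq (M *ᵥ x) = ‖f x'‖ ^ 2 := by rw [hnorm (f x'), happ]
  _ ≤ ‖f‖ ^ 2 * ‖x'‖ ^ 2 := h2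
  _ = matSpectralNorm M ^ 2 * vnormSq x := by
      rw [hnorm x']
      rfl

variable {n d : ℕ}

lemma mulVec_row_apply (A : Matrix (Fin n) (Fin d) ℝ) (x : Fin d → ℝ) (i : Fin n) :
    (A *ᵥ x) i = A i ⬝ᵥ x := rfl

lemma frobSq_nonneg (A : Matrix (Fin n) (Fin d) ℝ) : 0 ≤ frobSq A :=
  Finset.sum_nonneg fun i _ => vnormSq_nonneg _

lemma frobSq_pos [NeZero n] (A : Matrix (Fin n) (Fin d) ℝ) (hrows : ∀ i, A i ≠ 0) :
    0 < frobSq A := by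
  have : Nonempty (Fin n) := ⟨⟨0, Nat.pos_of_ne_zero (NeZero.ne n)⟩⟩
  exact Finset.sum_pos (fun i _ => vnormSq_pos (hrows i)) Finset.univ_nonempty

lemma rowCS (A : Matrix (Fin n) (Fin d) ℝ) (x : Fin d → ℝ) :
    vnormSq (A *ᵥ x) ≤ frobSq A * vnormSq x := by
  rw [vnormSq, frobSq, Finset.sum_mul]
  apply Finset.sum_le_sum
  intro i _
  have := dot_CS (A i) x
  simpa [mulVec_row_apply] using this

lemma inRowSpace_mulVecT (A : Matrix (Fin n) (Fin d) ℝ) (u : Fin n → ℝ) :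
    inRowSpace A (Aᵀ *ᵥ u) := ⟨u, rfl⟩

lemma inRowSpace_add {A : Matrix (Fin n) (Fin d) ℝ} {x y : Fin d → ℝ}
    (hx : inRowSpace A x) (hy : inRowSpace A y) : inRowSpace A (x + y) := by
  obtain ⟨u, hu⟩ := hx; obtain ⟨v, hv⟩ := hy
  exact ⟨u + v, by rw [hu, hv, Matrix.mulVec_add]⟩

lemma inRowSpace_smul {A : Matrix (Fin n) (Fin d) ℝ} (c : ℝ) {x : Fin d → ℝ}
    (hx : inRowSpace A x) : inRowSpace A (c • x) := by
  obtain ⟨u, hu⟩ := hx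
  exact ⟨c • u, by rw [hu, Matrix.mulVec_smul]⟩

lemma inRowSpace_sub {A : Matrix (Fin n) (Fin d) ℝ} {x y : Fin d → ℝ}
    (hx : inRowSpace A x) (hy : inRowSpace A y) : inRowSpace A (x - y) := by
  rw [sub_eq_add_neg]
  exact inRowSpace_add hx (by simpa [neg_one_smul] using inRowSpace_smul (-1 : ℝ) hy)

lemma inRowSpace_row (A : Matrix (Fin n) (Fin d) ℝ) (i : Fin n) :
    inRowSpace A (A i) := by
  refine ⟨Pi.single i 1, ?_⟩
  funext j
  simp [Matrix.mulVec, dotProduct, Matrix.transpose_apply, Pi.single_apply]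

lemma inRowSpace_kacMat {A : Matrix (Fin n) (Fin d) ℝ} {x : Fin d → ℝ}
    (hx : inRowSpace A x) : inRowSpace A (kacMat A *ᵥ x) := by
  have : kacMat A *ᵥ x = x - (frobSq A)⁻¹ • (Aᵀ *ᵥ (A *ᵥ x)) := by
    rw [kacMat, Matrix.sub_mulVec, Matrix.one_mulVec, Matrix.smul_mulVec,
     Matrix.mulVec_mulVec]
  rw [this]
  exact inRowSpace_sub hx (inRowSpace_smul _ (inRowSpace_mulVecT A _))

lemma pinv_fix {A : Matrix (Fin n) (Fin d) ℝ} {Ap : Matrix (Fin d) (Fin n) ℝ}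
    (hAp : IsMoorePenrose A Ap) {x : Fin d → ℝ} (hx : inRowSpace A x) :
    Ap *ᵥ (A *ᵥ x) = x := by
  obtain ⟨u, hu⟩ := hx
  have hm : Ap * A * Aᵀ = Aᵀ := by
    conv_lhs => rw [← hAp.2.2.2]
    rw [← Matrix.transpose_mul, ← Matrix.mul_assoc, hAp.1]
  rw [hu, Matrix.mulVec_mulVec, Matrix.mulVec_mulVec, Matrix.mul_assoc, ← Matrix.mul_assoc, hm]

lemma xstar_rowspace {A : Matrix (Fin n) (Fin d) ℝ} {Ap : Matrix (Fin d) (Fin n) ℝ}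
    (hAp : IsMoorePenrose A Ap) (b : Fin n → ℝ) : inRowSpace A (Ap *ᵥ b) := by
  refine ⟨Apᵀ *ᵥ (Ap *ᵥ b), ?_⟩
  rw [Matrix.mulVec_mulVec, Matrix.mulVec_mulVec]
  have : Aᵀ * Apᵀ * Ap = Ap := by
    rw [← Matrix.transpose_mul, hAp.2.2.2, hAp.2.1]
  rw [this]

lemma resid_orth {A : Matrix (Fin n) (Fin d) ℝ} {Ap : Matrix (Fin d) (Fin n) ℝ}
    (hAp : IsMoorePenrose A Ap) (b : Fin n → ℝ) :
    Aᵀ *ᵥ (b - A *ᵥ (Ap *ᵥ b)) = 0 := by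
  have hm : Aᵀ * (A * Ap) = Aᵀ := by
    conv_lhs => rw [← hAp.2.2.1]
    rw [← Matrix.transpose_mul, hAp.1]
  rw [Matrix.mulVec_sub, Matrix.mulVec_mulVec, Matrix.mulVec_mulVec, Matrix.mul_assoc, hm]
  simp

lemma rowspace_lower {A : Matrix (Fin n) (Fin d) ℝ} {Ap : Matrix (Fin d) (Fin n) ℝ}
    (hAp : IsMoorePenrose A Ap) {x : Fin d → ℝ} (hx : inRowSpace A x) :
    vnormSq x ≤ matSpectralNorm Ap ^ 2 * vnormSq (A *ᵥ x) := by
  have := spec_bound Ap (A *ᵥ x)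
  rwa [pinv_fix hAp hx] at this

lemma kdem_sq_eq (A : Matrix (Fin n) (Fin d) ℝ) (Ap : Matrix (Fin d) (Fin n) ℝ) :
    kdem A Ap ^ 2 = matSpectralNorm Ap ^ 2 * frobSq A := by
  rw [kdem, mul_pow, Real.sq_sqrt (frobSq_nonneg A)]

lemma one_le_kdem_sq [NeZero n] {A : Matrix (Fin n) (Fin d) ℝ} {Ap : Matrix (Fin d) (Fin n) ℝ}
    (hrows : ∀ i, A i ≠ 0) (hAp : IsMoorePenrose A Ap) : 1 ≤ kdem A Ap ^ 2 := by
  have i0 : Fin n := ⟨0, Nat.pos_of_ne_zero (NeZero.ne n)⟩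
  have hv : 0 < vnormSq (A i0) := vnormSq_pos (hrows i0)
  have h1 : vnormSq (A i0) ≤ matSpectralNorm Ap ^ 2 * vnormSq (A *ᵥ (A i0)) :=
    rowspace_lower hAp (inRowSpace_row A i0)
  have h2 : vnormSq (A *ᵥ (A i0)) ≤ frobSq A * vnormSq (A i0) := rowCS A (A i0)
  have h3 : vnormSq (A i0) ≤ matSpectralNorm Ap ^ 2 * frobSq A * vnormSq (A i0) := by
    calc vnormSq (A i0) ≤ matSpectralNorm Ap ^ 2 * vnormSq (A *ᵥ (A i0)) := h1
    _ ≤ matSpectralNorm Ap ^ 2 * (frobSq A * vnormSq (A i0)) :=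
        mul_le_mul_of_nonneg_left h2 (sq_nonneg _)
    _ = matSpectralNorm Ap ^ 2 * frobSq A * vnormSq (A i0) := by ring
  rw [kdem_sq_eq]
  nlinarith

lemma kac_apply (A : Matrix (Fin n) (Fin d) ℝ) (x : Fin d → ℝ) :
    kacMat A *ᵥ x = x - (frobSq A)⁻¹ • (Aᵀ *ᵥ (A *ᵥ x)) := by
  rw [kacMat, Matrix.sub_mulVec, Matrix.one_mulVec, Matrix.smul_mulVec,
    Matrix.mulVec_mulVec]

lemma kacMat_transpose (A : Matrix (Fin n) (Fin d) ℝ) : (kacMat A)ᵀ = kacMat A := by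
  rw [kacMat, Matrix.transpose_sub, Matrix.transpose_one, Matrix.transpose_smul,
    Matrix.transpose_mul, Matrix.transpose_transpose]

lemma dot_mulVec_symm {M : Matrix (Fin d) (Fin d) ℝ} (hM : Mᵀ = M) (x y : Fin d → ℝ) :
    x ⬝ᵥ (M *ᵥ y) = (M *ᵥ x) ⬝ᵥ y := by
  rw [Matrix.dotProduct_mulVec, ← Matrix.vecMul_transpose, hM]

lemma dot_kac_self (A : Matrix (Fin n) (Fin d) ℝ) (x : Fin d → ℝ) :
    x ⬝ᵥ (kacMat A *ᵥ x) = vnormSq x - (frobSq A)⁻¹ * vnormSq (A *ᵥ x) := by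
  rw [kac_apply, dotProduct_sub, dotProduct_smul, ← vnormSq_eq_dot,
    Matrix.dotProduct_mulVec, Matrix.vecMul_transpose, ← vnormSq_eq_dot]
  simp

lemma kac_psd (A : Matrix (Fin n) (Fin d) ℝ) [NeZero n] (hrows : ∀ i, A i ≠ 0)
    (x : Fin d → ℝ) : 0 ≤ x ⬝ᵥ (kacMat A *ᵥ x) := by
  rw [dot_kac_self]
  have hF := frobSq_pos A hrows
  have h := rowCS A x
  have : (frobSq A)⁻¹ * vnormSq (A *ᵥ x) ≤ vnormSq x := by
    rw [inv_mul_le_iff₀ hF]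
    linarith [h]
  linarith

lemma kac_upper [NeZero n] {A : Matrix (Fin n) (Fin d) ℝ} {Ap : Matrix (Fin d) (Fin n) ℝ}
    (hrows : ∀ i, A i ≠ 0) (hAp : IsMoorePenrose A Ap) {x : Fin d → ℝ}
    (hx : inRowSpace A x) :
    x ⬝ᵥ (kacMat A *ᵥ x) ≤ (1 - (kdem A Ap ^ 2)⁻¹) * vnormSq x := by
  rw [dot_kac_self, kdem_sq_eq]
  have hF := frobSq_pos A hrows
  have hk := one_le_kdem_sq hrows hAp
  rw [kdem_sq_eq] at hk
  have hs2 : 0 < matSpectralNorm Ap ^ 2 := by nlinarith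
  have h := rowspace_lower hAp hx
  have h2 : vnormSq x / matSpectralNorm Ap ^ 2 ≤ vnormSq (A *ᵥ x) := by
    rw [div_le_iff₀ hs2]
    nlinarith
  have h3 : (frobSq A)⁻¹ * (vnormSq x / matSpectralNorm Ap ^ 2) ≤
      (frobSq A)⁻¹ * vnormSq (A *ᵥ x) :=
    mul_le_mul_of_nonneg_left h2 (le_of_lt (inv_pos.mpr hF))
  have heq : (frobSq A)⁻¹ * (vnormSq x / matSpectralNorm Ap ^ 2) =
      (matSpectralNorm Ap ^ 2 * frobSq A)⁻¹ * vnormSq x := by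
    rw [mul_inv, div_eq_mul_inv]
    ring
  rw [heq] at h3
  linarith

lemma kac_CS [NeZero n] (A : Matrix (Fin n) (Fin d) ℝ) (hrows : ∀ i, A i ≠ 0)
    (x y : Fin d → ℝ) :
    (x ⬝ᵥ (kacMat A *ᵥ y)) ^ 2 ≤ (x ⬝ᵥ (kacMat A *ᵥ x)) * (y ⬝ᵥ (kacMat A *ᵥ y)) := by
  set P := kacMat A
  have hsym : Pᵀ = P := kacMat_transpose A
  have key : ∀ s : ℝ, 0 ≤ (y ⬝ᵥ (P *ᵥ y)) * (s * s) + (2 * (x ⬝ᵥ (P *ᵥ y))) * s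
      + (x ⬝ᵥ (P *ᵥ x)) := by
    intro s
    have h0 := kac_psd A hrows (x + s • y)
    have hexp : (x + s • y) ⬝ᵥ (P *ᵥ (x + s • y)) =
        (y ⬝ᵥ (P *ᵥ y)) * (s * s) + (2 * (x ⬝ᵥ (P *ᵥ y))) * s + (x ⬝ᵥ (P *ᵥ x)) := by
      rw [Matrix.mulVec_add, Matrix.mulVec_smul]
      rw [add_dotProduct, smul_dotProduct, dotProduct_add, dotProduct_add,
        dotProduct_smul, dotProduct_smul]
      have hyx : y ⬝ᵥ (P *ᵥ x) = x ⬝ᵥ (P *ᵥ y) := by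
        rw [dot_mulVec_symm hsym, dotProduct_comm]
      rw [hyx]
      simp only [smul_eq_mul]
      ring
    rw [hexp] at h0
    exact h0
  have hd := discrim_le_zero key
  rw [discrim] at hd
  nlinarith

lemma kac_norm_contract [NeZero n] {A : Matrix (Fin n) (Fin d) ℝ}
    {Ap : Matrix (Fin d) (Fin n) ℝ}
    (hrows : ∀ i, A i ≠ 0) (hAp : IsMoorePenrose A Ap) {x : Fin d → ℝ}
    (hx : inRowSpace A x) :
    vnormSq (kacMat A *ᵥ x) ≤ (1 - (kdem A Ap ^ 2)⁻¹) ^ 2 * vnormSq x := by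
  have hq0 : 0 ≤ 1 - (kdem A Ap ^ 2)⁻¹ := by
    have hk := one_le_kdem_sq hrows hAp
    have : (kdem A Ap ^ 2)⁻¹ ≤ 1 := by
      rw [inv_le_one_iff₀]; right; exact hk
    linarith
  set P := kacMat A
  set q : ℝ := 1 - (kdem A Ap ^ 2)⁻¹ with hq
  have hsym : Pᵀ = P := kacMat_transpose A
  have hn2 : vnormSq (P *ᵥ x) = x ⬝ᵥ (P *ᵥ (P *ᵥ x)) := by
    rw [dot_mulVec_symm hsym, vnormSq_eq_dot]
  have hCS := kac_CS A hrows x (P *ᵥ x)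
  have h1 : x ⬝ᵥ (P *ᵥ x) ≤ q * vnormSq x := kac_upper hrows hAp hx
  have hPx : inRowSpace A (P *ᵥ x) := inRowSpace_kacMat hx
  have h2 : (P *ᵥ x) ⬝ᵥ (P *ᵥ (P *ᵥ x)) ≤ q * vnormSq (P *ᵥ x) := kac_upper hrows hAp hPx
  have hpos1 : 0 ≤ x ⬝ᵥ (P *ᵥ x) := kac_psd A hrows x
  have hpos2 : 0 ≤ (P *ᵥ x) ⬝ᵥ (P *ᵥ (P *ᵥ x)) := kac_psd A hrows (P *ᵥ x)
  have hvx : 0 ≤ vnormSq x := vnormSq_nonneg x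
  have hvpx : 0 ≤ vnormSq (P *ᵥ x) := vnormSq_nonneg _
  rcases hvpx.lt_or_eq with hlt | heq
  · have key : (vnormSq (P *ᵥ x)) ^ 2 ≤ q ^ 2 * vnormSq x * vnormSq (P *ᵥ x) := by
      calc (vnormSq (P *ᵥ x)) ^ 2 = (x ⬝ᵥ (P *ᵥ (P *ᵥ x))) ^ 2 := by rw [hn2]
      _ ≤ (x ⬝ᵥ (P *ᵥ x)) * ((P *ᵥ x) ⬝ᵥ (P *ᵥ (P *ᵥ x))) := hCS
      _ ≤ (q * vnormSq x) * (q * vnormSq (P *ᵥ x)) := by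
          apply mul_le_mul h1 h2 hpos2 (by positivity)
      _ = q ^ 2 * vnormSq x * vnormSq (P *ᵥ x) := by ring
    nlinarith
  · rw [← heq]
    positivity

lemma inRowSpace_kac_pow {A : Matrix (Fin n) (Fin d) ℝ} {x : Fin d → ℝ}
    (hx : inRowSpace A x) (k : ℕ) : inRowSpace A ((kacMat A ^ k) *ᵥ x) := by
  induction k with
  | zero => simpa [Matrix.one_mulVec] using hx
  | succ k ih =>
      have : (kacMat A ^ (k+1)) *ᵥ x = kacMat A *ᵥ ((kacMat A ^ k) *ᵥ x) := by
        rw [Matrix.mulVec_mulVec, ← pow_succ']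
      rw [this]
      exact inRowSpace_kacMat ih

lemma kac_pow_contract [NeZero n] {A : Matrix (Fin n) (Fin d) ℝ}
    {Ap : Matrix (Fin d) (Fin n) ℝ}
    (hrows : ∀ i, A i ≠ 0) (hAp : IsMoorePenrose A Ap) {x : Fin d → ℝ}
    (hx : inRowSpace A x) (k : ℕ) :
    vnormSq ((kacMat A ^ k) *ᵥ x) ≤ ((1 - (kdem A Ap ^ 2)⁻¹) ^ k) ^ 2 * vnormSq x := by
  induction k with
  | zero => simp [Matrix.one_mulVec]
  | succ k ih =>
      have hstep : (kacMat A ^ (k+1)) *ᵥ x = kacMat A *ᵥ ((kacMat A ^ k) *ᵥ x) := by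
        rw [Matrix.mulVec_mulVec, ← pow_succ']
      rw [hstep]
      calc vnormSq (kacMat A *ᵥ ((kacMat A ^ k) *ᵥ x))
          ≤ (1 - (kdem A Ap ^ 2)⁻¹) ^ 2 * vnormSq ((kacMat A ^ k) *ᵥ x) :=
            kac_norm_contract hrows hAp (inRowSpace_kac_pow hx k)
      _ ≤ (1 - (kdem A Ap ^ 2)⁻¹) ^ 2 * (((1 - (kdem A Ap ^ 2)⁻¹) ^ k) ^ 2 * vnormSq x) :=
            mul_le_mul_of_nonneg_left ih (sq_nonneg _)
      _ = ((1 - (kdem A Ap ^ 2)⁻¹) ^ (k+1)) ^ 2 * vnormSq x := by ring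

lemma dot_kac_pow [NeZero n] {A : Matrix (Fin n) (Fin d) ℝ}
    {Ap : Matrix (Fin d) (Fin n) ℝ}
    (hrows : ∀ i, A i ≠ 0) (hAp : IsMoorePenrose A Ap) {x : Fin d → ℝ}
    (hx : inRowSpace A x) (k : ℕ) :
    x ⬝ᵥ ((kacMat A ^ k) *ᵥ x) ≤ (1 - (kdem A Ap ^ 2)⁻¹) ^ k * vnormSq x := by
  have hq0 : 0 ≤ 1 - (kdem A Ap ^ 2)⁻¹ := by
    have hk := one_le_kdem_sq hrows hAp
    have : (kdem A Ap ^ 2)⁻¹ ≤ 1 := by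
      rw [inv_le_one_iff₀]; right; exact hk
    linarith
  exact dot_le_of_sq (pow_nonneg hq0 k) (kac_pow_contract hrows hAp hx k)

lemma dot_sum_left {k : ℕ} {ι : Type*} (s : Finset ι) (f : ι → Fin k → ℝ) (v : Fin k → ℝ) :
    (∑ x ∈ s, f x) ⬝ᵥ v = ∑ x ∈ s, f x ⬝ᵥ v := by
  simp only [dotProduct, Finset.sum_apply, Finset.sum_mul]
  exact Finset.sum_comm

lemma dot_sum_right {k : ℕ} {ι : Type*} (s : Finset ι) (v : Fin k → ℝ) (f : ι → Fin k → ℝ) :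
    v ⬝ᵥ (∑ x ∈ s, f x) = ∑ x ∈ s, v ⬝ᵥ f x := by
  simp only [dotProduct, Finset.sum_apply, Finset.mul_sum]
  exact Finset.sum_comm

lemma mulVec_sum {k l : ℕ} {ι : Type*} (s : Finset ι) (M : Matrix (Fin k) (Fin l) ℝ)
    (f : ι → Fin l → ℝ) : M *ᵥ (∑ x ∈ s, f x) = ∑ x ∈ s, M *ᵥ f x := by
  show M.mulVecLin (∑ x ∈ s, f x) = _
  rw [map_sum]
  rfl

/-- Expectation of a function of the path, over paths of length `T`. -/
def epath {n d : ℕ} (A : Matrix (Fin n) (Fin d) ℝ) (T : ℕ) (f : (Fin T → Fin n) → ℝ) : ℝ :=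
  ∑ ω : Fin T → Fin n, pathWeight A ω * f ω

lemma rowProb_nonneg (A : Matrix (Fin n) (Fin d) ℝ) (i : Fin n) : 0 ≤ rowProb A i :=
  div_nonneg (vnormSq_nonneg _) (frobSq_nonneg A)

lemma sum_rowProb [NeZero n] (A : Matrix (Fin n) (Fin d) ℝ) (hrows : ∀ i, A i ≠ 0) :
    ∑ i, rowProb A i = 1 := by
  have hF := frobSq_pos A hrows
  simp only [rowProb]
  rw [← Finset.sum_div, ← frobSq, div_self (ne_of_gt hF)]

lemma pathWeight_nonneg {T : ℕ} (A : Matrix (Fin n) (Fin d) ℝ) (ω : Fin T → Fin n) :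
    0 ≤ pathWeight A ω :=
  Finset.prod_nonneg fun i _ => rowProb_nonneg A (ω i)

/-- Splitting a path of length T+1 into its first T steps and its last step. -/
def snocEquiv (n T : ℕ) : ((Fin T → Fin n) × Fin n) ≃ (Fin (T+1) → Fin n) where
  toFun p := Fin.snoc p.1 p.2
  invFun ω := (Fin.init ω, ω (Fin.last T))
  left_inv p := by simp [Fin.init_snoc, Fin.snoc_last]
  right_inv ω := Fin.snoc_init_self ω

lemma pathWeight_snoc {T : ℕ} (A : Matrix (Fin n) (Fin d) ℝ) (ω : Fin T → Fin n) (i : Fin n) :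
    pathWeight A (Fin.snoc ω i) = pathWeight A ω * rowProb A i := by
  rw [pathWeight, Fin.prod_univ_castSucc]
  simp [Fin.snoc_castSucc, Fin.snoc_last, pathWeight]

lemma epath_succ (A : Matrix (Fin n) (Fin d) ℝ) (T : ℕ) (f : (Fin (T+1) → Fin n) → ℝ) :
    epath A (T+1) f = epath A T (fun ω => ∑ i, rowProb A i * f (Fin.snoc ω i)) := by
  rw [epath, ← Equiv.sum_comp (snocEquiv n T) (fun ω => pathWeight A ω * f ω),
    Fintype.sum_prod_type]
  apply Finset.sum_congr rfl
  intro ω _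
  rw [Finset.mul_sum]
  apply Finset.sum_congr rfl
  intro i _
  show pathWeight A (Fin.snoc ω i) * f (Fin.snoc ω i) = _
  rw [pathWeight_snoc]
  ring

lemma epath_const [NeZero n] (A : Matrix (Fin n) (Fin d) ℝ) (hrows : ∀ i, A i ≠ 0)
    (T : ℕ) (c : ℝ) : epath A T (fun _ => c) = c := by
  induction T with
  | zero =>
      rw [epath]
      rw [Finset.sum_eq_single_of_mem (fun i : Fin 0 => i.elim0) (Finset.mem_univ _)]
      · show pathWeight A _ * c = c
        rw [pathWeight]
        simp
      · intro ω _ hω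
        exfalso
        apply hω
        funext i
        exact i.elim0
  | succ T ih =>
      rw [epath_succ]
      have : (fun ω : Fin T → Fin n => ∑ i, rowProb A i * c) = fun _ => c := by
        funext ω
        rw [← Finset.sum_mul, sum_rowProb A hrows, one_mul]
      rw [this, ih]

lemma epath_mono {T : ℕ} (A : Matrix (Fin n) (Fin d) ℝ) {f g : (Fin T → Fin n) → ℝ}
    (h : ∀ ω, f ω ≤ g ω) : epath A T f ≤ epath A T g :=
  Finset.sum_le_sum fun ω _ => mul_le_mul_of_nonneg_left (h ω) (pathWeight_nonneg A ω)

lemma epath_congr {T : ℕ} (A : Matrix (Fin n) (Fin d) ℝ) {f g : (Fin T → Fin n) → ℝ}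
    (h : ∀ ω, f ω = g ω) : epath A T f = epath A T g := by
  unfold epath
  exact Finset.sum_congr rfl fun ω _ => by rw [h ω]

lemma epath_const_mul {T : ℕ} (A : Matrix (Fin n) (Fin d) ℝ) (c : ℝ)
    (f : (Fin T → Fin n) → ℝ) : epath A T (fun ω => c * f ω) = c * epath A T f := by
  unfold epath
  rw [Finset.mul_sum]
  exact Finset.sum_congr rfl fun ω _ => by ring

lemma epath_add {T : ℕ} (A : Matrix (Fin n) (Fin d) ℝ) (f g : (Fin T → Fin n) → ℝ) :
    epath A T (fun ω => f ω + g ω) = epath A T f + epath A T g := by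
  unfold epath
  rw [← Finset.sum_add_distrib]
  exact Finset.sum_congr rfl fun ω _ => by ring

lemma epath_sum {T : ℕ} {ι : Type*} (A : Matrix (Fin n) (Fin d) ℝ) (s : Finset ι)
    (f : ι → (Fin T → Fin n) → ℝ) :
    epath A T (fun ω => ∑ x ∈ s, f x ω) = ∑ x ∈ s, epath A T (f x) := by
  unfold epath
  rw [Finset.sum_comm]
  apply Finset.sum_congr rfl
  intro ω _
  rw [Finset.mul_sum]

lemma rkSeq_congr (A : Matrix (Fin n) (Fin d) ℝ) (b : Fin n → ℝ) (x0 : Fin d → ℝ)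
    (ω₁ ω₂ : ℕ → Fin n) : ∀ s, (∀ j, j < s → ω₁ j = ω₂ j) →
    rkSeq A b x0 ω₁ s = rkSeq A b x0 ω₂ s := by
  intro s
  induction s with
  | zero => intro _; rfl
  | succ s ih =>
      intro h
      show rkStep A b (ω₁ s) _ = rkStep A b (ω₂ s) _
      rw [h s (Nat.lt_succ_self s), ih (fun j hj => h j (Nat.lt_succ_of_lt hj))]

lemma extendPath_snoc_lt [NeZero n] {T : ℕ} (ω : Fin T → Fin n) (i : Fin n) (j : ℕ)
    (hj : j < T) : extendPath (Fin.snoc ω i) j = extendPath ω j := by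
  rw [extendPath, extendPath, dif_pos hj, dif_pos (Nat.lt_succ_of_lt hj)]
  simp [Fin.snoc, hj]

lemma extendPath_snoc_last [NeZero n] {T : ℕ} (ω : Fin T → Fin n) (i : Fin n) :
    extendPath (Fin.snoc ω i) T = i := by
  rw [extendPath, dif_pos (Nat.lt_succ_self T)]
  simp [Fin.snoc]

lemma rkSeq_snoc [NeZero n] {T : ℕ} (A : Matrix (Fin n) (Fin d) ℝ) (b : Fin n → ℝ)
    (x0 : Fin d → ℝ) (ω : Fin T → Fin n) (i : Fin n) {s : ℕ} (hs : s ≤ T) :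
    rkSeq A b x0 (extendPath (Fin.snoc ω i)) s = rkSeq A b x0 (extendPath ω) s :=
  rkSeq_congr A b x0 _ _ s fun j hj => extendPath_snoc_lt ω i j (lt_of_lt_of_le hj hs)

lemma rkSeq_snoc_succ [NeZero n] {T : ℕ} (A : Matrix (Fin n) (Fin d) ℝ) (b : Fin n → ℝ)
    (x0 : Fin d → ℝ) (ω : Fin T → Fin n) (i : Fin n) :
    rkSeq A b x0 (extendPath (Fin.snoc ω i)) (T+1)
      = rkStep A b i (rkSeq A b x0 (extendPath ω) T) := by
  show rkStep A b (extendPath (Fin.snoc ω i) T) (rkSeq A b x0 (extendPath (Fin.snoc ω i)) T) = _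
  rw [extendPath_snoc_last, rkSeq_snoc A b x0 ω i (le_refl T)]

lemma vnormSq_add_smul {k : ℕ} (e a : Fin k → ℝ) (γ : ℝ) :
    vnormSq (e + γ • a) = vnormSq e + 2*γ*(a ⬝ᵥ e) + γ^2 * vnormSq a := by
  rw [vnormSq_eq_dot, vnormSq_eq_dot, vnormSq_eq_dot]
  rw [add_dotProduct, dotProduct_add, dotProduct_add, smul_dotProduct, dotProduct_smul,
    smul_dotProduct, dotProduct_comm e a]
  simp only [smul_eq_mul, dotProduct_smul]
  ring

lemma transpose_mulVec_eq_sum (A : Matrix (Fin n) (Fin d) ℝ) (w : Fin n → ℝ) :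
    Aᵀ *ᵥ w = ∑ i, w i • A i := by
  funext j
  simp [Matrix.mulVec, dotProduct, Matrix.transpose_apply, mul_comm]

lemma step_mean_vec [NeZero n] {A : Matrix (Fin n) (Fin d) ℝ} (hrows : ∀ i, A i ≠ 0)
    {b : Fin n → ℝ} {xstar : Fin d → ℝ} (hres : Aᵀ *ᵥ (b - A *ᵥ xstar) = 0)
    (x : Fin d → ℝ) :
    ∑ i, rowProb A i • (rkStep A b i x - xstar) = kacMat A *ᵥ (x - xstar) := by
  have hF := frobSq_pos A hrows
  have hstep : ∀ i, rkStep A b i x - xstar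
      = (x - xstar) + ((b i - A i ⬝ᵥ x) / vnormSq (A i)) • A i := by
    intro i; rw [rkStep]; abel
  have hsum : ∑ i, rowProb A i • (rkStep A b i x - xstar)
      = (∑ i, rowProb A i) • (x - xstar)
        + ∑ i, ((frobSq A)⁻¹ * (b i - A i ⬝ᵥ x)) • A i := by
    rw [Finset.sum_smul, ← Finset.sum_add_distrib]
    apply Finset.sum_congr rfl
    intro i _
    rw [hstep i, smul_add, smul_smul]
    congr 2
    have ha := ne_of_gt (vnormSq_pos (hrows i))
    rw [rowProb]
    field_simp
  rw [hsum, sum_rowProb A hrows, one_smul]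
  have hAw : ∑ i, ((frobSq A)⁻¹ * (b i - A i ⬝ᵥ x)) • A i
      = (frobSq A)⁻¹ • (Aᵀ *ᵥ (b - A *ᵥ x)) := by
    rw [transpose_mulVec_eq_sum, Finset.smul_sum]
    apply Finset.sum_congr rfl
    intro i _
    rw [smul_smul]
    congr 1
  rw [hAw, kac_apply]
  have hsplit : Aᵀ *ᵥ (A *ᵥ (x - xstar)) = - (Aᵀ *ᵥ (b - A *ᵥ x)) := by
    have : A *ᵥ (x - xstar) = -((b - A *ᵥ x) + -(b - A *ᵥ xstar)) := by
      rw [Matrix.mulVec_sub]; abel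
    rw [this, Matrix.mulVec_neg, Matrix.mulVec_add, Matrix.mulVec_neg, hres]
    abel
  rw [hsplit, smul_neg, sub_neg_eq_add]

lemma step_mean_dot [NeZero n] {A : Matrix (Fin n) (Fin d) ℝ} (hrows : ∀ i, A i ≠ 0)
    {b : Fin n → ℝ} {xstar : Fin d → ℝ} (hres : Aᵀ *ᵥ (b - A *ᵥ xstar) = 0)
    (u : Fin d → ℝ) (M : Matrix (Fin d) (Fin d) ℝ) (x : Fin d → ℝ) :
    ∑ i, rowProb A i * (u ⬝ᵥ (M *ᵥ (rkStep A b i x - xstar)))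
      = u ⬝ᵥ ((M * kacMat A) *ᵥ (x - xstar)) := by
  have key := congrArg (fun v => u ⬝ᵥ (M *ᵥ v)) (step_mean_vec hrows hres x)
  rw [← Matrix.mulVec_mulVec, ← key, mulVec_sum, dot_sum_right]
  apply Finset.sum_congr rfl
  intro i _
  rw [Matrix.mulVec_smul, dotProduct_smul, smul_eq_mul]

lemma step_sq_term [NeZero n] {A : Matrix (Fin n) (Fin d) ℝ} (hrows : ∀ i, A i ≠ 0)
    (b : Fin n → ℝ) (xstar : Fin d → ℝ) (x : Fin d → ℝ) (i : Fin n) :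
    rowProb A i * vnormSq (rkStep A b i x - xstar)
      = (frobSq A)⁻¹ * (vnormSq (A i) * vnormSq (x - xstar)
        - (A i ⬝ᵥ (x - xstar))^2 + ((b - A *ᵥ xstar) i)^2) := by
  have hF := ne_of_gt (frobSq_pos A hrows)
  have ha := ne_of_gt (vnormSq_pos (hrows i))
  have hstep : rkStep A b i x - xstar
      = (x - xstar) + ((b i - A i ⬝ᵥ x) / vnormSq (A i)) • A i := by
    rw [rkStep]; abel
  rw [hstep, vnormSq_add_smul, rowProb]
  have hbx : b i - A i ⬝ᵥ x = (b - A *ᵥ xstar) i - A i ⬝ᵥ (x - xstar) := by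
    rw [Pi.sub_apply, mulVec_row_apply, dotProduct_sub]
    ring
  rw [hbx]
  field_simp
  ring

lemma step_sq [NeZero n] {A : Matrix (Fin n) (Fin d) ℝ} (hrows : ∀ i, A i ≠ 0)
    (b : Fin n → ℝ) (xstar : Fin d → ℝ) (x : Fin d → ℝ) :
    ∑ i, rowProb A i * vnormSq (rkStep A b i x - xstar)
      = (x - xstar) ⬝ᵥ (kacMat A *ᵥ (x - xstar))
        + (frobSq A)⁻¹ * vnormSq (b - A *ᵥ xstar) := by
  have hF := ne_of_gt (frobSq_pos A hrows)
  have h1 : ∑ i, rowProb A i * vnormSq (rkStep A b i x - xstar)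
      = (frobSq A)⁻¹ * (frobSq A * vnormSq (x - xstar)
        - vnormSq (A *ᵥ (x - xstar)) + vnormSq (b - A *ᵥ xstar)) := by
    rw [Finset.sum_congr rfl (fun i _ => step_sq_term hrows b xstar x i), ← Finset.mul_sum]
    have h2 : vnormSq (A *ᵥ (x - xstar)) = ∑ i, (A i ⬝ᵥ (x - xstar))^2 := by
      rw [vnormSq]
      exact Finset.sum_congr rfl fun i _ => by rw [mulVec_row_apply]
    have h3 : vnormSq (b - A *ᵥ xstar) = ∑ i, ((b - A *ᵥ xstar) i)^2 := rfl
    rw [h2, h3, Finset.sum_add_distrib, Finset.sum_sub_distrib, ← Finset.sum_mul, ← frobSq]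
  rw [h1, dot_kac_self]
  field_simp

lemma err_rowspace {A : Matrix (Fin n) (Fin d) ℝ} {b : Fin n → ℝ} {x0 xstar : Fin d → ℝ}
    (h0 : inRowSpace A x0) (hxs : inRowSpace A xstar) (ω : ℕ → Fin n) :
    ∀ s, inRowSpace A (rkSeq A b x0 ω s - xstar) := by
  intro s
  induction s with
  | zero => exact inRowSpace_sub h0 hxs
  | succ s ih =>
      have : rkSeq A b x0 ω (s+1) - xstar
          = (rkSeq A b x0 ω s - xstar)
            + ((b (ω s) - A (ω s) ⬝ᵥ rkSeq A b x0 ω s) / vnormSq (A (ω s))) • A (ω s) := by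
        show rkStep A b (ω s) (rkSeq A b x0 ω s) - xstar = _
        rw [rkStep]; abel
      rw [this]
      exact inRowSpace_add ih (inRowSpace_smul _ (inRowSpace_row A (ω s)))

lemma epath_markov [NeZero n] {A : Matrix (Fin n) (Fin d) ℝ} (hrows : ∀ i, A i ≠ 0)
    {b : Fin n → ℝ} {xstar : Fin d → ℝ} (hres : Aᵀ *ᵥ (b - A *ᵥ xstar) = 0)
    (x0 : Fin d → ℝ) (s : ℕ) :
    ∀ (k : ℕ) (M : Matrix (Fin d) (Fin d) ℝ),
    epath A (s+k) (fun ω => (rkSeq A b x0 (extendPath ω) s - xstar)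
        ⬝ᵥ (M *ᵥ (rkSeq A b x0 (extendPath ω) (s+k) - xstar)))
      = epath A s (fun ω => (rkSeq A b x0 (extendPath ω) s - xstar)
        ⬝ᵥ ((M * kacMat A ^ k) *ᵥ (rkSeq A b x0 (extendPath ω) s - xstar))) := by
  intro k
  induction k with
  | zero =>
      intro M
      simp [pow_zero, mul_one]
  | succ k ih =>
      intro M
      have hcongr : ∀ ω : Fin (s+k) → Fin n,
          (∑ i, rowProb A i * ((rkSeq A b x0 (extendPath (Fin.snoc ω i)) s - xstar)
            ⬝ᵥ (M *ᵥ (rkSeq A b x0 (extendPath (Fin.snoc ω i)) ((s+k)+1) - xstar))))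
          = (rkSeq A b x0 (extendPath ω) s - xstar)
            ⬝ᵥ ((M * kacMat A) *ᵥ (rkSeq A b x0 (extendPath ω) (s+k) - xstar)) := by
        intro ω
        have h1 : ∀ i : Fin n, rkSeq A b x0 (extendPath (Fin.snoc ω i)) s
            = rkSeq A b x0 (extendPath ω) s :=
          fun i => rkSeq_snoc A b x0 ω i (Nat.le_add_right s k)
        have h2 : ∀ i : Fin n, rkSeq A b x0 (extendPath (Fin.snoc ω i)) ((s+k)+1)
            = rkStep A b i (rkSeq A b x0 (extendPath ω) (s+k)) :=
          fun i => rkSeq_snoc_succ A b x0 ω i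
        calc ∑ i, rowProb A i * ((rkSeq A b x0 (extendPath (Fin.snoc ω i)) s - xstar)
            ⬝ᵥ (M *ᵥ (rkSeq A b x0 (extendPath (Fin.snoc ω i)) ((s+k)+1) - xstar)))
            = ∑ i, rowProb A i * ((rkSeq A b x0 (extendPath ω) s - xstar)
              ⬝ᵥ (M *ᵥ (rkStep A b i (rkSeq A b x0 (extendPath ω) (s+k)) - xstar))) := by
              apply Finset.sum_congr rfl
              intro i _
              rw [h1 i, h2 i]
        _ = _ := step_mean_dot hrows hres _ M _
      calc epath A ((s+k)+1) (fun ω => (rkSeq A b x0 (extendPath ω) s - xstar)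
            ⬝ᵥ (M *ᵥ (rkSeq A b x0 (extendPath ω) ((s+k)+1) - xstar)))
          = epath A (s+k) (fun ω => ∑ i, rowProb A i *
              ((rkSeq A b x0 (extendPath (Fin.snoc ω i)) s - xstar)
                ⬝ᵥ (M *ᵥ (rkSeq A b x0 (extendPath (Fin.snoc ω i)) ((s+k)+1) - xstar)))) :=
            epath_succ A (s+k) _
      _ = epath A (s+k) (fun ω => (rkSeq A b x0 (extendPath ω) s - xstar)
            ⬝ᵥ ((M * kacMat A) *ᵥ (rkSeq A b x0 (extendPath ω) (s+k) - xstar))) :=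
            epath_congr A hcongr
      _ = epath A s (fun ω => (rkSeq A b x0 (extendPath ω) s - xstar)
            ⬝ᵥ ((M * kacMat A * kacMat A ^ k) *ᵥ (rkSeq A b x0 (extendPath ω) s - xstar))) :=
            ih (M * kacMat A)
      _ = _ := by rw [Matrix.mul_assoc, ← pow_succ']

lemma epath_sq_bound [NeZero n] {A : Matrix (Fin n) (Fin d) ℝ}
    {Ap : Matrix (Fin d) (Fin n) ℝ} (hrows : ∀ i, A i ≠ 0) (hAp : IsMoorePenrose A Ap)
    {b : Fin n → ℝ} {x0 xstar : Fin d → ℝ}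
    (h0 : inRowSpace A x0) (hxs : inRowSpace A xstar) :
    ∀ s : ℕ, epath A s (fun ω => vnormSq (rkSeq A b x0 (extendPath ω) s - xstar))
      ≤ (1 - (kdem A Ap ^ 2)⁻¹) ^ s * vnormSq (x0 - xstar)
        + matSpectralNorm Ap ^ 2 * vnormSq (b - A *ᵥ xstar) := by
  have hF := frobSq_pos A hrows
  have hk := one_le_kdem_sq hrows hAp
  have hq0 : 0 ≤ 1 - (kdem A Ap ^ 2)⁻¹ := by
    have : (kdem A Ap ^ 2)⁻¹ ≤ 1 := by
      rw [inv_le_one_iff₀]; right; exact hk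
    linarith
  have hs2 : 0 < matSpectralNorm Ap ^ 2 := by
    rw [kdem_sq_eq] at hk; nlinarith
  intro s
  induction s with
  | zero =>
      have : epath A 0 (fun ω => vnormSq (rkSeq A b x0 (extendPath ω) 0 - xstar))
          = vnormSq (x0 - xstar) := epath_const A hrows 0 _
      rw [this, pow_zero, one_mul]
      have : 0 ≤ matSpectralNorm Ap ^ 2 * vnormSq (b - A *ᵥ xstar) :=
        mul_nonneg (sq_nonneg _) (vnormSq_nonneg _)
      linarith
  | succ s ih =>
      have hstep : epath A (s+1) (fun ω => vnormSq (rkSeq A b x0 (extendPath ω) (s+1) - xstar))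
          = epath A s (fun ω => (rkSeq A b x0 (extendPath ω) s - xstar)
              ⬝ᵥ (kacMat A *ᵥ (rkSeq A b x0 (extendPath ω) s - xstar))
            + (frobSq A)⁻¹ * vnormSq (b - A *ᵥ xstar)) := by
        rw [epath_succ]
        apply epath_congr
        intro ω
        calc ∑ i, rowProb A i * vnormSq (rkSeq A b x0 (extendPath (Fin.snoc ω i)) (s+1) - xstar)
            = ∑ i, rowProb A i * vnormSq (rkStep A b i (rkSeq A b x0 (extendPath ω) s) - xstar) := by
              apply Finset.sum_congr rfl
              intro i _
              rw [rkSeq_snoc_succ A b x0 ω i]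
        _ = _ := step_sq hrows b xstar _
      rw [hstep]
      have hmono : epath A s (fun ω => (rkSeq A b x0 (extendPath ω) s - xstar)
              ⬝ᵥ (kacMat A *ᵥ (rkSeq A b x0 (extendPath ω) s - xstar))
            + (frobSq A)⁻¹ * vnormSq (b - A *ᵥ xstar))
          ≤ epath A s (fun ω => (1 - (kdem A Ap ^ 2)⁻¹)
              * vnormSq (rkSeq A b x0 (extendPath ω) s - xstar)
            + (frobSq A)⁻¹ * vnormSq (b - A *ᵥ xstar)) := by
        apply epath_mono
        intro ω
        have := kac_upper hrows hAp
          (err_rowspace (b := b) (x0 := x0) (xstar := xstar) h0 hxs (extendPath ω) s)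
        linarith
      have heval : epath A s (fun ω => (1 - (kdem A Ap ^ 2)⁻¹)
              * vnormSq (rkSeq A b x0 (extendPath ω) s - xstar)
            + (frobSq A)⁻¹ * vnormSq (b - A *ᵥ xstar))
          = (1 - (kdem A Ap ^ 2)⁻¹)
              * epath A s (fun ω => vnormSq (rkSeq A b x0 (extendPath ω) s - xstar))
            + (frobSq A)⁻¹ * vnormSq (b - A *ᵥ xstar) := by
        rw [epath_add, epath_const_mul, epath_const A hrows]
      have hclose : (1 - (kdem A Ap ^ 2)⁻¹) * matSpectralNorm Ap ^ 2 + (frobSq A)⁻¹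
          = matSpectralNorm Ap ^ 2 := by
        rw [kdem_sq_eq, mul_inv]
        have hs0 : matSpectralNorm Ap ≠ 0 := fun h => by rw [h] at hs2; norm_num at hs2
        field_simp
        ring
      have hvr : 0 ≤ vnormSq (b - A *ᵥ xstar) := vnormSq_nonneg _
      calc epath A s (fun ω => (rkSeq A b x0 (extendPath ω) s - xstar)
              ⬝ᵥ (kacMat A *ᵥ (rkSeq A b x0 (extendPath ω) s - xstar))
            + (frobSq A)⁻¹ * vnormSq (b - A *ᵥ xstar))
          ≤ (1 - (kdem A Ap ^ 2)⁻¹)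
              * epath A s (fun ω => vnormSq (rkSeq A b x0 (extendPath ω) s - xstar))
            + (frobSq A)⁻¹ * vnormSq (b - A *ᵥ xstar) := by rw [← heval]; exact hmono
      _ ≤ (1 - (kdem A Ap ^ 2)⁻¹) * ((1 - (kdem A Ap ^ 2)⁻¹) ^ s * vnormSq (x0 - xstar)
            + matSpectralNorm Ap ^ 2 * vnormSq (b - A *ᵥ xstar))
            + (frobSq A)⁻¹ * vnormSq (b - A *ᵥ xstar) := by
          have := mul_le_mul_of_nonneg_left ih hq0
          linarith
      _ = (1 - (kdem A Ap ^ 2)⁻¹) ^ (s+1) * vnormSq (x0 - xstar)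
            + ((1 - (kdem A Ap ^ 2)⁻¹) * matSpectralNorm Ap ^ 2 + (frobSq A)⁻¹)
              * vnormSq (b - A *ᵥ xstar) := by ring
      _ = _ := by rw [hclose]

lemma epath_reduce [NeZero n] {A : Matrix (Fin n) (Fin d) ℝ} (hrows : ∀ i, A i ≠ 0)
    (b : Fin n → ℝ) (x0 xstar : Fin d → ℝ) {s s' : ℕ} (hs : s ≤ s') :
    ∀ T, s' ≤ T → epath A T (fun ω => (rkSeq A b x0 (extendPath ω) s - xstar)
        ⬝ᵥ (rkSeq A b x0 (extendPath ω) s' - xstar))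
      = epath A s' (fun ω => (rkSeq A b x0 (extendPath ω) s - xstar)
        ⬝ᵥ (rkSeq A b x0 (extendPath ω) s' - xstar)) := by
  intro T hT
  induction T, hT using Nat.le_induction with
  | base => rfl
  | succ T hT ih =>
      calc epath A (T+1) (fun ω => (rkSeq A b x0 (extendPath ω) s - xstar)
            ⬝ᵥ (rkSeq A b x0 (extendPath ω) s' - xstar))
          = epath A T (fun ω => ∑ i, rowProb A i *
              ((rkSeq A b x0 (extendPath (Fin.snoc ω i)) s - xstar)
                ⬝ᵥ (rkSeq A b x0 (extendPath (Fin.snoc ω i)) s' - xstar))) :=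
            epath_succ A T _
      _ = epath A T (fun ω => (rkSeq A b x0 (extendPath ω) s - xstar)
            ⬝ᵥ (rkSeq A b x0 (extendPath ω) s' - xstar)) := by
            apply epath_congr
            intro ω
            rw [Finset.sum_congr rfl (fun i _ => by
              rw [rkSeq_snoc A b x0 ω i (le_trans hs hT), rkSeq_snoc A b x0 ω i hT]),
              ← Finset.sum_mul, sum_rowProb A hrows, one_mul]
      _ = _ := ih

lemma epath_cross [NeZero n] {A : Matrix (Fin n) (Fin d) ℝ}
    {Ap : Matrix (Fin d) (Fin n) ℝ} (hrows : ∀ i, A i ≠ 0) (hAp : IsMoorePenrose A Ap)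
    {b : Fin n → ℝ} {x0 xstar : Fin d → ℝ} (hres : Aᵀ *ᵥ (b - A *ᵥ xstar) = 0)
    (h0 : inRowSpace A x0) (hxs : inRowSpace A xstar)
    (s k t : ℕ) (h : s + k ≤ t) :
    epath A t (fun ω => (rkSeq A b x0 (extendPath ω) s - xstar)
        ⬝ᵥ (rkSeq A b x0 (extendPath ω) (s+k) - xstar))
      ≤ (1 - (kdem A Ap ^ 2)⁻¹) ^ k * ((1 - (kdem A Ap ^ 2)⁻¹) ^ s * vnormSq (x0 - xstar)
          + matSpectralNorm Ap ^ 2 * vnormSq (b - A *ᵥ xstar)) := by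
  have hq0 : 0 ≤ 1 - (kdem A Ap ^ 2)⁻¹ := by
    have hk := one_le_kdem_sq hrows hAp
    have : (kdem A Ap ^ 2)⁻¹ ≤ 1 := by
      rw [inv_le_one_iff₀]; right; exact hk
    linarith
  have hred := epath_reduce hrows b x0 xstar (Nat.le_add_right s k) t h
  have hmark := epath_markov hrows hres x0 s k 1
  have hone : epath A (s+k) (fun ω => (rkSeq A b x0 (extendPath ω) s - xstar)
        ⬝ᵥ (rkSeq A b x0 (extendPath ω) (s+k) - xstar))
      = epath A (s+k) (fun ω => (rkSeq A b x0 (extendPath ω) s - xstar)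
        ⬝ᵥ ((1 : Matrix (Fin d) (Fin d) ℝ) *ᵥ (rkSeq A b x0 (extendPath ω) (s+k) - xstar))) := by
    apply epath_congr
    intro ω
    rw [Matrix.one_mulVec]
  have honek : (1 : Matrix (Fin d) (Fin d) ℝ) * kacMat A ^ k = kacMat A ^ k := Matrix.one_mul _
  rw [hred, hone, hmark, honek]
  calc epath A s (fun ω => (rkSeq A b x0 (extendPath ω) s - xstar)
        ⬝ᵥ ((kacMat A ^ k) *ᵥ (rkSeq A b x0 (extendPath ω) s - xstar)))
      ≤ epath A s (fun ω => (1 - (kdem A Ap ^ 2)⁻¹) ^ k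
          * vnormSq (rkSeq A b x0 (extendPath ω) s - xstar)) := by
        apply epath_mono
        intro ω
        exact dot_kac_pow hrows hAp
          (err_rowspace (b := b) (x0 := x0) (xstar := xstar) h0 hxs (extendPath ω) s) k
  _ = (1 - (kdem A Ap ^ 2)⁻¹) ^ k
        * epath A s (fun ω => vnormSq (rkSeq A b x0 (extendPath ω) s - xstar)) :=
      epath_const_mul A _ _
  _ ≤ _ :=
      mul_le_mul_of_nonneg_left (epath_sq_bound hrows hAp h0 hxs s) (pow_nonneg hq0 k)

section Geom

variable {q : ℝ}

lemma geom_sum_le' (hq0 : 0 ≤ q) (hq1 : q < 1) (m : ℕ) :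
    ∑ j ∈ Finset.range m, q^j ≤ 1/(1-q) := by
  have h := geom_sum_mul q m
  have h1q : 0 < 1 - q := by linarith
  rw [le_div_iff₀ h1q]
  nlinarith [pow_nonneg hq0 m]

lemma sum_pow_sub_eq (m : ℕ) : ∑ a ∈ Finset.range m, q^(m-a) = q * ∑ j ∈ Finset.range m, q^j := by
  have h1 : ∀ a ∈ Finset.range m, q^(m-a) = (fun j => q^(j+1)) (m-1-a) := by
    intro a ha
    have ha' := Finset.mem_range.mp ha
    have : m - 1 - a + 1 = m - a := by omega
    simp only
    rw [this]
  rw [Finset.sum_congr rfl h1, Finset.sum_range_reflect (fun j => q^(j+1)) m, Finset.mul_sum]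
  apply Finset.sum_congr rfl
  intro j _
  rw [pow_succ]
  ring

lemma sum_dist_le (hq0 : 0 ≤ q) (hq1 : q < 1) :
    ∀ m : ℕ, ∑ a ∈ Finset.range m, ∑ a' ∈ Finset.range m, q^(Nat.dist a a')
      ≤ (m : ℝ) * ((1+q)/(1-q)) := by
  intro m
  have h1q : 0 < 1 - q := by linarith
  induction m with
  | zero => simp
  | succ m ih =>
      have hrow : ∑ a ∈ Finset.range m, q^(Nat.dist a m) ≤ q/(1-q) := by
        have : ∀ a ∈ Finset.range m, q^(Nat.dist a m) = q^(m-a) := by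
          intro a ha
          rw [Nat.dist_eq_sub_of_le (le_of_lt (Finset.mem_range.mp ha))]
        rw [Finset.sum_congr rfl this, sum_pow_sub_eq]
        have := geom_sum_le' hq0 hq1 m
        calc q * ∑ j ∈ Finset.range m, q^j ≤ q * (1/(1-q)) :=
              mul_le_mul_of_nonneg_left this hq0
        _ = q/(1-q) := by ring
      have hrow' : ∑ a' ∈ Finset.range m, q^(Nat.dist m a') ≤ q/(1-q) := by
        have : ∀ a' ∈ Finset.range m, q^(Nat.dist m a') = q^(Nat.dist a' m) := by
          intro a' _
          rw [Nat.dist_comm]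
        rw [Finset.sum_congr rfl this]
        exact hrow
      have hsplit : ∑ a ∈ Finset.range (m+1), ∑ a' ∈ Finset.range (m+1), q^(Nat.dist a a')
          = (∑ a ∈ Finset.range m, ∑ a' ∈ Finset.range m, q^(Nat.dist a a'))
            + (∑ a ∈ Finset.range m, q^(Nat.dist a m))
            + ((∑ a' ∈ Finset.range m, q^(Nat.dist m a')) + q^(Nat.dist m m)) := by
        rw [Finset.sum_range_succ]
        congr 1
        · rw [← Finset.sum_add_distrib]
          apply Finset.sum_congr rfl
          intro a _
          rw [Finset.sum_range_succ]
        · rw [Finset.sum_range_succ]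
      rw [hsplit, Nat.dist_self, pow_zero]
      push_cast
      have : (1 : ℝ) + 2 * (q/(1-q)) = (1+q)/(1-q) := by
        field_simp
        ring
      nlinarith [ih]

lemma sum_max_le (hq0 : 0 ≤ q) (hq1 : q < 1) :
    ∀ m : ℕ, ∑ a ∈ Finset.range m, ∑ a' ∈ Finset.range m, q^(max a a')
      ≤ (1+q)/(1-q)^2 := by
  have h1q : 0 < 1 - q := by linarith
  have key : ∀ m : ℕ, ∑ a ∈ Finset.range m, ∑ a' ∈ Finset.range m, q^(max a a')
      ≤ (1+q)/(1-q)^2 - q^m * ((2*(m:ℝ)+1)/(1-q) + 2*q/(1-q)^2) := by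
    intro m
    induction m with
    | zero =>
        have : (1+q)/(1-q)^2 - (q:ℝ)^0 * ((2*((0:ℕ):ℝ)+1)/(1-q) + 2*q/(1-q)^2) = 0 := by
          push_cast
          rw [pow_zero]
          field_simp
          ring
        rw [this]
        simp
    | succ m ih =>
        have hsplit : ∑ a ∈ Finset.range (m+1), ∑ a' ∈ Finset.range (m+1), q^(max a a')
            = (∑ a ∈ Finset.range m, ∑ a' ∈ Finset.range m, q^(max a a'))
              + (2*(m:ℝ)+1) * q^m := by
          rw [Finset.sum_range_succ]
          have hin : ∀ a ∈ Finset.range m, ∑ a' ∈ Finset.range (m+1), q^(max a a')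
              = (∑ a' ∈ Finset.range m, q^(max a a')) + q^m := by
            intro a ha
            rw [Finset.sum_range_succ, max_eq_right (le_of_lt (Finset.mem_range.mp ha))]
          have hlast : ∑ a' ∈ Finset.range (m+1), q^(max m a')
              = (m:ℝ) * q^m + q^m := by
            rw [Finset.sum_range_succ, max_self]
            congr 1
            rw [Finset.sum_congr rfl (fun a' ha' => by
              rw [max_eq_left (le_of_lt (Finset.mem_range.mp ha'))]),
              Finset.sum_const, Finset.card_range, nsmul_eq_mul]
          rw [Finset.sum_congr rfl hin, hlast, Finset.sum_add_distrib,
            Finset.sum_const, Finset.card_range, nsmul_eq_mul]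
          ring
        rw [hsplit]
        have hstep : q^m * ((2*(m:ℝ)+1)/(1-q) + 2*q/(1-q)^2) - (2*(m:ℝ)+1)*q^m
            = q^(m+1) * ((2*((m:ℕ)+1:ℝ)+1)/(1-q) + 2*q/(1-q)^2) := by
          rw [pow_succ]
          field_simp
          ring
        push_cast
        push_cast at ih hstep
        linarith
  intro m
  have := key m
  have hrem : 0 ≤ q^m * ((2*(m:ℝ)+1)/(1-q) + 2*q/(1-q)^2) := by
    apply mul_nonneg (pow_nonneg hq0 m)
    have h1 : 0 ≤ (2*(m:ℝ)+1)/(1-q) := by positivity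
    have h2 : 0 ≤ 2*q/(1-q)^2 := by positivity
    linarith
  linarith

end Geom

lemma nat_dist_add_min (s s' : ℕ) : Nat.dist s s' + min s s' = max s s' := by
  simp [Nat.dist]
  omega

end TarkAux


open TarkAux in
/-- alternative TARK error bound:
E‖x̄_t - x⋆‖² ≤ ((2κ_dem² - 1)/(t - t_b)) [κ_dem²(1 - κ_dem⁻²)^{t_b} ‖x_0 - x⋆‖²/(t - t_b)
  + ‖A⁺‖² ‖b - Ax⋆‖²], assuming x_0 ∈ range(Aᵀ). -/
theorem tark_alternative_bound {n d : ℕ} [NeZero n]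
    (A : Matrix (Fin n) (Fin d) ℝ) (b : Fin n → ℝ) (hrows : ∀ i, A i ≠ 0)
    (Ap : Matrix (Fin d) (Fin n) ℝ) (hAp : IsMoorePenrose A Ap)
    (xstar : Fin d → ℝ) (hx : xstar = Ap *ᵥ b)
    (x0 : Fin d → ℝ) (h0 : inRowSpace A x0)
    (tb t : ℕ) (htb : tb < t) :
    ∑ ω : Fin t → Fin n, pathWeight A ω *
        vnormSq ((((t : ℝ) - (tb : ℝ))⁻¹) •
          (∑ s ∈ Finset.Ico tb t, rkSeq A b x0 (extendPath ω) s) - xstar)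
      ≤ (2 * kdem A Ap ^ 2 - 1) / ((t : ℝ) - (tb : ℝ)) *
          (kdem A Ap ^ 2 * (1 - (kdem A Ap ^ 2)⁻¹) ^ tb / ((t : ℝ) - (tb : ℝ)) *
              vnormSq (x0 - xstar)
            + matSpectralNorm Ap ^ 2 * vnormSq (b - A *ᵥ xstar)) := by
  classical
  have hres : Aᵀ *ᵥ (b - A *ᵥ xstar) = 0 := by rw [hx]; exact resid_orth hAp b
  have hxs : inRowSpace A xstar := by rw [hx]; exact xstar_rowspace hAp b
  have hk := one_le_kdem_sq hrows hAp
  have hκpos : (0:ℝ) < kdem A Ap ^ 2 := lt_of_lt_of_le one_pos hk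
  have hq0 : (0:ℝ) ≤ 1 - (kdem A Ap ^ 2)⁻¹ := by
    have : (kdem A Ap ^ 2)⁻¹ ≤ 1 := by rw [inv_le_one_iff₀]; right; exact hk
    linarith
  have hq1 : (1:ℝ) - (kdem A Ap ^ 2)⁻¹ < 1 := by
    have : 0 < (kdem A Ap ^ 2)⁻¹ := inv_pos.mpr hκpos
    linarith
  set κ2 : ℝ := kdem A Ap ^ 2 with hκ2
  set q : ℝ := 1 - κ2⁻¹ with hqdef
  set V0 : ℝ := vnormSq (x0 - xstar) with hV0def
  set W : ℝ := matSpectralNorm Ap ^ 2 * vnormSq (b - A *ᵥ xstar) with hWdef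
  have hV0 : 0 ≤ V0 := vnormSq_nonneg _
  have hW : 0 ≤ W := mul_nonneg (sq_nonneg _) (vnormSq_nonneg _)
  set m : ℕ := t - tb with hm
  have hm0 : 0 < m := Nat.sub_pos_of_lt htb
  have hmr : (t:ℝ) - (tb:ℝ) = (m:ℝ) := by rw [hm, Nat.cast_sub (le_of_lt htb)]
  have hmrpos : 0 < (m:ℝ) := Nat.cast_pos.mpr hm0
  have h1q : 1 - q = κ2⁻¹ := by rw [hqdef]; ring
  have h2q : 1 + q = 2 - κ2⁻¹ := by rw [hqdef]; ring
  -- pathwise expansion of the squared norm of the tail average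
  have hpath : ∀ ω : Fin t → Fin n,
      vnormSq ((((t : ℝ) - (tb : ℝ))⁻¹) •
          (∑ s ∈ Finset.Ico tb t, rkSeq A b x0 (extendPath ω) s) - xstar)
      = ((m:ℝ)⁻¹)^2 * ∑ s ∈ Finset.Ico tb t, ∑ s' ∈ Finset.Ico tb t,
          ((rkSeq A b x0 (extendPath ω) s - xstar)
            ⬝ᵥ (rkSeq A b x0 (extendPath ω) s' - xstar)) := by
    intro ω
    have hsub : (((t : ℝ) - (tb : ℝ))⁻¹) •
          (∑ s ∈ Finset.Ico tb t, rkSeq A b x0 (extendPath ω) s) - xstar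
        = (m:ℝ)⁻¹ • (∑ s ∈ Finset.Ico tb t, (rkSeq A b x0 (extendPath ω) s - xstar)) := by
      rw [hmr, Finset.sum_sub_distrib, smul_sub, Finset.sum_const, Nat.card_Ico, ← hm]
      congr 1
      rw [← Nat.cast_smul_eq_nsmul ℝ, smul_smul, inv_mul_cancel₀ (ne_of_gt hmrpos), one_smul]
    rw [hsub, vnormSq_smul, vnormSq_eq_dot,
      dot_sum_left (Finset.Ico tb t) (fun s => rkSeq A b x0 (extendPath ω) s - xstar)]
    congr 1
    exact Finset.sum_congr rfl fun s _ =>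
      dot_sum_right (Finset.Ico tb t) _ (fun s' => rkSeq A b x0 (extendPath ω) s' - xstar)
  -- expectation of the expansion
  have hE : epath A t (fun ω =>
        vnormSq ((((t : ℝ) - (tb : ℝ))⁻¹) •
          (∑ s ∈ Finset.Ico tb t, rkSeq A b x0 (extendPath ω) s) - xstar))
      = ((m:ℝ)⁻¹)^2 * ∑ s ∈ Finset.Ico tb t, ∑ s' ∈ Finset.Ico tb t,
          epath A t (fun ω => (rkSeq A b x0 (extendPath ω) s - xstar)
            ⬝ᵥ (rkSeq A b x0 (extendPath ω) s' - xstar)) := by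
    rw [epath_congr A hpath, epath_const_mul A]
    congr 1
    rw [epath_sum A (Finset.Ico tb t) (fun s ω => ∑ s' ∈ Finset.Ico tb t,
      ((rkSeq A b x0 (extendPath ω) s - xstar) ⬝ᵥ (rkSeq A b x0 (extendPath ω) s' - xstar)))]
    exact Finset.sum_congr rfl fun s _ => epath_sum A (Finset.Ico tb t)
      (fun s' ω => (rkSeq A b x0 (extendPath ω) s - xstar)
        ⬝ᵥ (rkSeq A b x0 (extendPath ω) s' - xstar))
  -- cross-moment bounds
  have main : ∀ u v : ℕ, u ≤ v → v < t →
      epath A t (fun ω => (rkSeq A b x0 (extendPath ω) u - xstar)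
        ⬝ᵥ (rkSeq A b x0 (extendPath ω) v - xstar))
      ≤ q^(Nat.dist u v) * (q^(min u v) * V0 + W) := by
    intro u v huv hvt
    obtain ⟨k, rfl⟩ := Nat.exists_eq_add_of_le huv
    have hd : Nat.dist u (u+k) = k := by unfold Nat.dist; omega
    have hmin : min u (u+k) = u := min_eq_left (Nat.le_add_right u k)
    rw [hd, hmin]
    exact epath_cross hrows hAp hres h0 hxs u k t (le_of_lt hvt)
  have hcross : ∀ s ∈ Finset.Ico tb t, ∀ s' ∈ Finset.Ico tb t,
      epath A t (fun ω => (rkSeq A b x0 (extendPath ω) s - xstar)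
        ⬝ᵥ (rkSeq A b x0 (extendPath ω) s' - xstar))
      ≤ q^(Nat.dist s s') * (q^(min s s') * V0 + W) := by
    intro s hs s' hs'
    rcases le_total s s' with h | h
    · exact main s s' h (Finset.mem_Ico.mp hs').2
    · have hsym : epath A t (fun ω => (rkSeq A b x0 (extendPath ω) s - xstar)
          ⬝ᵥ (rkSeq A b x0 (extendPath ω) s' - xstar))
          = epath A t (fun ω => (rkSeq A b x0 (extendPath ω) s' - xstar)
          ⬝ᵥ (rkSeq A b x0 (extendPath ω) s - xstar)) :=
        epath_congr A fun ω => dotProduct_comm _ _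
      rw [hsym, Nat.dist_comm, min_comm]
      exact main s' s h (Finset.mem_Ico.mp hs).2
  -- bound the double sum of the pair bounds
  have hterm : ∀ s s' : ℕ, q^(Nat.dist s s') * (q^(min s s') * V0 + W)
      = q^(max s s') * V0 + q^(Nat.dist s s') * W := by
    intro s s'
    rw [← nat_dist_add_min s s', pow_add]
    ring
  have hmax : ∑ s ∈ Finset.Ico tb t, ∑ s' ∈ Finset.Ico tb t, q^(max s s')
      = q^tb * ∑ a ∈ Finset.range m, ∑ a' ∈ Finset.range m, q^(max a a') := by
    rw [Finset.sum_Ico_eq_sum_range, ← hm, Finset.mul_sum]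
    apply Finset.sum_congr rfl
    intro a _
    rw [Finset.sum_Ico_eq_sum_range, ← hm, Finset.mul_sum]
    apply Finset.sum_congr rfl
    intro a' _
    have : max (tb + a) (tb + a') = tb + max a a' := by omega
    rw [this, pow_add]
  have hdist : ∑ s ∈ Finset.Ico tb t, ∑ s' ∈ Finset.Ico tb t, q^(Nat.dist s s')
      = ∑ a ∈ Finset.range m, ∑ a' ∈ Finset.range m, q^(Nat.dist a a') := by
    rw [Finset.sum_Ico_eq_sum_range, ← hm]
    apply Finset.sum_congr rfl
    intro a _
    rw [Finset.sum_Ico_eq_sum_range, ← hm]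
    apply Finset.sum_congr rfl
    intro a' _
    have : Nat.dist (tb + a) (tb + a') = Nat.dist a a' := by unfold Nat.dist; omega
    rw [this]
  have hsum : ∑ s ∈ Finset.Ico tb t, ∑ s' ∈ Finset.Ico tb t,
        (q^(Nat.dist s s') * (q^(min s s') * V0 + W))
      ≤ q^tb * ((1+q)/(1-q)^2) * V0 + (m:ℝ) * ((1+q)/(1-q)) * W := by
    have hsplit : ∑ s ∈ Finset.Ico tb t, ∑ s' ∈ Finset.Ico tb t,
          (q^(Nat.dist s s') * (q^(min s s') * V0 + W))
        = (∑ s ∈ Finset.Ico tb t, ∑ s' ∈ Finset.Ico tb t, q^(max s s')) * V0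
          + (∑ s ∈ Finset.Ico tb t, ∑ s' ∈ Finset.Ico tb t, q^(Nat.dist s s')) * W := by
      rw [Finset.sum_mul, Finset.sum_mul, ← Finset.sum_add_distrib]
      apply Finset.sum_congr rfl
      intro s _
      rw [Finset.sum_mul, Finset.sum_mul, ← Finset.sum_add_distrib]
      exact Finset.sum_congr rfl fun s' _ => hterm s s'
    rw [hsplit, hmax, hdist]
    have b1 : q^tb * (∑ a ∈ Finset.range m, ∑ a' ∈ Finset.range m, q^(max a a')) * V0
        ≤ q^tb * ((1+q)/(1-q)^2) * V0 := by
      apply mul_le_mul_of_nonneg_right _ hV0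
      exact mul_le_mul_of_nonneg_left (sum_max_le hq0 hq1 m) (pow_nonneg hq0 tb)
    have b2 : (∑ a ∈ Finset.range m, ∑ a' ∈ Finset.range m, q^(Nat.dist a a')) * W
        ≤ (m:ℝ) * ((1+q)/(1-q)) * W :=
      mul_le_mul_of_nonneg_right (sum_dist_le hq0 hq1 m) hW
    linarith
  -- put everything together
  show epath A t (fun ω =>
      vnormSq ((((t : ℝ) - (tb : ℝ))⁻¹) •
        (∑ s ∈ Finset.Ico tb t, rkSeq A b x0 (extendPath ω) s) - xstar)) ≤ _
  rw [hE, hmr]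
  have hmid : ∑ s ∈ Finset.Ico tb t, ∑ s' ∈ Finset.Ico tb t,
        epath A t (fun ω => (rkSeq A b x0 (extendPath ω) s - xstar)
          ⬝ᵥ (rkSeq A b x0 (extendPath ω) s' - xstar))
      ≤ q^tb * ((1+q)/(1-q)^2) * V0 + (m:ℝ) * ((1+q)/(1-q)) * W := by
    refine le_trans ?_ hsum
    apply Finset.sum_le_sum
    intro s hs
    apply Finset.sum_le_sum
    intro s' hs'
    exact hcross s hs s' hs'
  calc ((m:ℝ)⁻¹)^2 * ∑ s ∈ Finset.Ico tb t, ∑ s' ∈ Finset.Ico tb t,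
        epath A t (fun ω => (rkSeq A b x0 (extendPath ω) s - xstar)
          ⬝ᵥ (rkSeq A b x0 (extendPath ω) s' - xstar))
      ≤ ((m:ℝ)⁻¹)^2 * (q^tb * ((1+q)/(1-q)^2) * V0 + (m:ℝ) * ((1+q)/(1-q)) * W) :=
        mul_le_mul_of_nonneg_left hmid (by positivity)
  _ = (2 * κ2 - 1) / (m:ℝ) * (κ2 * q ^ tb / (m:ℝ) * V0 + W) := by
      rw [h1q, h2q]
      have hκ0 : κ2 ≠ 0 := ne_of_gt hκpos
      have hm0' : (m:ℝ) ≠ 0 := ne_of_gt hmrpos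
      field_simp
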